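/- Suppose the oblivious agents are exactly the agents n'+1,…,n with 0 ≤ n' < n, so that W = [[W¹¹, W¹²],[0, W²²]] and Λ = [[Λ¹¹, 0],[0, I_{n−n'}]]. Then the multidimensional model x(k+1) = (ΛW ⊗ C) x(k) + ((I_n − Λ) ⊗ I_m) u, x(0) = u, is convergent (x(k) has a limit for every u ∈ ℝ^{mn}) if and only if C is regular and either C_* := lim_{k→∞} C^k = 0 or W²² is regular. -/

import Mathlib

open Filter Matrix Kronecker Finset

section helpers

variable {ι : Type*} [Fintype ι] [DecidableEq ι]

/-- row sum of a product -/
lemma fjRowSum_mul (M N : Matrix ι ι ℝ) (i : ι) :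
    ∑ j, (M * N) i j = ∑ h, M i h * ∑ j, N h j := by
  simp only [Matrix.mul_apply, Finset.mul_sum]
  exact Finset.sum_comm

lemma fjPow_nonneg {M : Matrix ι ι ℝ} (h : ∀ i j, 0 ≤ M i j) (k : ℕ) :
    ∀ i j, 0 ≤ (M ^ k) i j := by
  induction k with
  | zero => intro i j; by_cases hij : i = j <;> simp [hij, Matrix.one_apply]
  | succ k ih =>
      intro i j
      rw [pow_succ, Matrix.mul_apply]
      exact Finset.sum_nonneg fun h' _ => mul_nonneg (ih i h') (h h' j)

lemma fjRowSum_pow_le_one {M : Matrix ι ι ℝ} (h0 : ∀ i j, 0 ≤ M i j)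
    (h1 : ∀ i, ∑ j, M i j ≤ 1) (k : ℕ) (i : ι) : ∑ j, (M ^ k) i j ≤ 1 := by
  induction k generalizing i with
  | zero => simp [Matrix.one_apply]
  | succ k ih =>
      rw [pow_succ', fjRowSum_mul]
      calc ∑ h, M i h * ∑ j, (M ^ k) h j ≤ ∑ h, M i h * 1 := by
            refine Finset.sum_le_sum fun h' _ => ?_
            exact mul_le_mul_of_nonneg_left (ih h') (h0 i h')
        _ ≤ 1 := by simpa using h1 i

lemma fjRowSum_pow_eq_one {M : Matrix ι ι ℝ} (h1 : ∀ i, ∑ j, M i j = 1) (k : ℕ) (i : ι) :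
    ∑ j, (M ^ k) i j = 1 := by
  induction k generalizing i with
  | zero => simp [Matrix.one_apply]
  | succ k ih =>
      rw [pow_succ', fjRowSum_mul]
      simp only [ih]
      simpa using h1 i

lemma fjEntry_le_rowSum {M : Matrix ι ι ℝ} (h0 : ∀ i j, 0 ≤ M i j) (i j : ι) :
    M i j ≤ ∑ j', M i j' :=
  Finset.single_le_sum (fun j' _ => h0 i j') (Finset.mem_univ j)

/-- row sums of products bounded -/
lemma fjRowSum_mul_le {M N : Matrix ι ι ℝ} (hM : ∀ i j, 0 ≤ M i j) {c : ℝ}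
    (hN : ∀ h, ∑ j, N h j ≤ c) (i : ι) : ∑ j, (M * N) i j ≤ c * ∑ j, M i j := by
  rw [fjRowSum_mul, Finset.mul_sum]
  refine Finset.sum_le_sum fun h _ => ?_
  rw [mul_comm c (M i h)]
  exact mul_le_mul_of_nonneg_left (hN h) (hM i h)

end helpers

/-- sum of r^(a/K) over range (K*n) -/
lemma fjSum_pow_div (r : ℝ) (K : ℕ) (hK : 0 < K) :
    ∀ n : ℕ, ∑ a ∈ Finset.range (K * n), r ^ (a / K) = K * ∑ q ∈ Finset.range n, r ^ q := by
  intro n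
  induction n with
  | zero => simp
  | succ n ih =>
      have hsplit : K * (n + 1) = K * n + K := by ring
      rw [hsplit, Finset.range_eq_Ico, ← Finset.sum_Ico_consecutive _ (Nat.zero_le (K * n)) (Nat.le_add_right (K * n) K),
        ← Finset.range_eq_Ico, ih]
      have hconst : ∑ a ∈ Finset.Ico (K * n) (K * n + K), r ^ (a / K) = K * r ^ n := by
        have : ∀ a ∈ Finset.Ico (K * n) (K * n + K), r ^ (a / K) = r ^ n := by
          intro a ha
          rw [Finset.mem_Ico] at ha
          congr 1
          exact Nat.div_eq_of_lt_le (by rw [mul_comm]; exact ha.1) (by rw [Nat.succ_mul, mul_comm n K]; exact ha.2)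
        rw [Finset.sum_congr rfl this, Finset.sum_const, Nat.card_Ico]
        simp [nsmul_eq_mul]
      rw [hconst, Finset.sum_range_succ]
      ring

lemma fjSummable_pow_div {r : ℝ} (h0 : 0 ≤ r) (h1 : r < 1) {K : ℕ} (hK : 0 < K) :
    Summable (fun a : ℕ => r ^ (a / K)) := by
  refine summable_of_sum_range_le (c := K * (1 - r)⁻¹) (fun n => pow_nonneg h0 _) (fun n => ?_)
  have h2 : ∑ a ∈ Finset.range n, r ^ (a / K) ≤ ∑ a ∈ Finset.range (K * n), r ^ (a / K) := by
    refine Finset.sum_le_sum_of_subset_of_nonneg (Finset.range_subset_range.2 (Nat.le_mul_of_pos_left n hK))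
      (fun a _ _ => pow_nonneg h0 _)
  refine h2.trans ?_
  rw [fjSum_pow_div r K hK]
  refine mul_le_mul_of_nonneg_left ?_ (Nat.cast_nonneg K)
  rw [← tsum_geometric_of_lt_one h0 h1]
  exact Summable.sum_le_tsum _ (fun a _ => pow_nonneg h0 _) (summable_geometric_of_lt_one h0 h1)

/-- dominated convergence for truncated range sums -/
lemma fjTendsto_sum_range_of_dominated {F : ℕ → ℕ → ℝ} {g : ℕ → ℝ} {bound : ℕ → ℝ}
    (hb : Summable bound) (hlim : ∀ a, Tendsto (fun k => F k a) atTop (nhds (g a)))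
    (hbd : ∀ k a, |F k a| ≤ bound a) :
    Tendsto (fun k => ∑ a ∈ Finset.range k, F k a) atTop (nhds (∑' a, g a)) := by
  have key : Tendsto (fun k => ∑' a, (if a < k then F k a else 0)) atTop (nhds (∑' a, g a)) := by
    refine tendsto_tsum_of_dominated_convergence hb (fun a => ?_) ?_
    · refine Tendsto.congr' ?_ (hlim a)
      filter_upwards [eventually_ge_atTop (a + 1)] with k hk
      simp [Nat.lt_of_lt_of_le (Nat.lt_succ_self a) hk]
    · filter_upwards with k a
      by_cases h : a < k
      · simpa [h] using hbd k a
      · simpa [h] using (abs_nonneg (F k a)).trans (hbd k a)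
  refine key.congr fun k => ?_
  rw [tsum_eq_sum (s := Finset.range k) (fun b hb' => by simp [Finset.mem_range.not.1 hb'])]
  exact Finset.sum_congr rfl fun a ha => by simp [Finset.mem_range.1 ha]

/-- a convergent family of matrices is uniformly entrywise bounded -/
lemma fjUnifBound {ι κ : Type*} [Fintype ι] [Fintype κ] {f : ℕ → Matrix ι κ ℝ}
    {F : Matrix ι κ ℝ} (h : Tendsto f atTop (nhds F)) :
    ∃ c : ℝ, 0 ≤ c ∧ ∀ k i j, |f k i j| ≤ c := by
  have hg : Tendsto (fun k => ∑ i, ∑ j, |f k i j|) atTop (nhds (∑ i, ∑ j, |F i j|)) := by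
    refine tendsto_finset_sum _ fun i _ => tendsto_finset_sum _ fun j _ => ?_
    have : Tendsto (fun k => f k i j) atTop (nhds (F i j)) := by
      have h1 := (tendsto_pi_nhds.1 h) i
      exact (tendsto_pi_nhds.1 h1) j
    exact this.abs
  obtain ⟨c, hc⟩ := hg.bddAbove_range
  refine ⟨c, ?_, fun k i j => ?_⟩
  · exact le_trans (Finset.sum_nonneg fun i _ => Finset.sum_nonneg fun j _ => abs_nonneg _)
      (hc ⟨0, rfl⟩)
  · refine le_trans ?_ (hc ⟨k, rfl⟩)
    calc |f k i j| ≤ ∑ j', |f k i j'| :=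
          Finset.single_le_sum (f := fun j' => |f k i j'|) (fun j' _ => abs_nonneg _) (Finset.mem_univ j)
      _ ≤ ∑ i', ∑ j', |f k i' j'| :=
          Finset.single_le_sum (f := fun i' => ∑ j', |f k i' j'|)
            (fun i' _ => Finset.sum_nonneg fun j' _ => abs_nonneg _) (Finset.mem_univ i)

lemma fjIterate {ι : Type*} [Fintype ι] [DecidableEq ι] (M : Matrix ι ι ℝ) (b u : ι → ℝ) (k : ℕ) :
    (fun x => M.mulVec x + b)^[k] u
      = (M ^ k).mulVec u + ∑ j ∈ Finset.range k, (M ^ j).mulVec b := by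
  induction k with
  | zero => simp
  | succ k ih =>
      rw [Function.iterate_succ_apply', ih]
      have h1 : M.mulVec ((M ^ k).mulVec u) = (M ^ (k + 1)).mulVec u := by
        rw [pow_succ', ← Matrix.mulVec_mulVec]
      have h2 : M.mulVec (∑ j ∈ Finset.range k, (M ^ j).mulVec b)
          = ∑ j ∈ Finset.range k, (M ^ (j + 1)).mulVec b := by
        rw [← Matrix.mulVecLin_apply, map_sum]
        refine Finset.sum_congr rfl fun j _ => ?_
        rw [Matrix.mulVecLin_apply, Matrix.mulVec_mulVec, ← pow_succ']
      rw [Matrix.mulVec_add, h1, h2, Finset.sum_range_succ' (fun j => (M ^ j).mulVec b) k]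
      simp [add_assoc]

lemma fjKronPow {ι κ : Type*} [Fintype ι] [DecidableEq ι] [Fintype κ] [DecidableEq κ]
    (P : Matrix ι ι ℝ) (C : Matrix κ κ ℝ) (k : ℕ) :
    (P ⊗ₖ C) ^ k = (P ^ k) ⊗ₖ (C ^ k) := by
  induction k with
  | zero => simp [Matrix.one_kronecker_one]
  | succ k ih => rw [pow_succ, ih, ← Matrix.mul_kronecker_mul, ← pow_succ, ← pow_succ]

lemma fjKronMulVec {ι κ : Type*} [Fintype ι] [Fintype κ]
    (P : Matrix ι ι ℝ) (C : Matrix κ κ ℝ) (x : ι × κ → ℝ) (i : ι) (l : κ) :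
    ((P ⊗ₖ C).mulVec x) (i, l) = ∑ j, ∑ l', P i j * C l l' * x (j, l') := by
  rw [Matrix.mulVec, dotProduct, Fintype.sum_prod_type]
  exact Finset.sum_congr rfl fun j _ => Finset.sum_congr rfl fun l' _ => by
    rw [Matrix.kroneckerMap_apply]

lemma fjBlockPow {α β : Type*} [Fintype α] [Fintype β] [DecidableEq α] [DecidableEq β]
    (A : Matrix α α ℝ) (B : Matrix α β ℝ) (D : Matrix β β ℝ) (k : ℕ) :
    (Matrix.fromBlocks A B 0 D) ^ k
      = Matrix.fromBlocks (A ^ k) (∑ a ∈ Finset.range k, A ^ a * B * D ^ (k - 1 - a)) 0 (D ^ k) := by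
  induction k with
  | zero => simp [Matrix.fromBlocks_one]
  | succ k ih =>
      rw [pow_succ', ih, Matrix.fromBlocks_multiply]
      have hTR : A * (∑ a ∈ Finset.range k, A ^ a * B * D ^ (k - 1 - a)) + B * D ^ k
          = ∑ a ∈ Finset.range (k + 1), A ^ a * B * D ^ (k + 1 - 1 - a) := by
        rw [Finset.sum_range_succ' (fun a => A ^ a * B * D ^ (k + 1 - 1 - a)) k]
        rw [Matrix.mul_sum]
        congr 1
        · refine Finset.sum_congr rfl fun a ha => ?_
          rw [← Matrix.mul_assoc, ← Matrix.mul_assoc, ← pow_succ']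
          congr 2
          omega
        · simp
      rw [hTR]
      simp [← pow_succ']

section helpers2
variable {ι : Type*} [Fintype ι] [DecidableEq ι]

-- copies of earlier helpers assumed available; for this test re-import
lemma fjRowSum_mul' (M N : Matrix ι ι ℝ) (i : ι) :
    ∑ j, (M * N) i j = ∑ h, M i h * ∑ j, N h j := by
  simp only [Matrix.mul_apply, Finset.mul_sum]
  exact Finset.sum_comm
end helpers2

lemma fjRestrict {α β : Type*} {R : α ⊕ β → α ⊕ β → Prop} {R1 : α → α → Prop}
    (hR : ∀ a b, R (Sum.inl a) (Sum.inl b) → R1 a b)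
    (hno : ∀ b x, ¬ R (Sum.inr b) (Sum.inl x)) :
    ∀ {x y}, Relation.TransGen R x y → ∀ {i j}, x = Sum.inl i → y = Sum.inl j →
      Relation.TransGen R1 i j := by
  intro x y h
  induction h with
  | single h =>
      intro i j hx hy; subst hx; subst hy
      exact Relation.TransGen.single (hR _ _ h)
  | tail hxb hbc ih =>
      intro i j hx hy; subst hx; subst hy
      rename_i b
      cases b with
      | inl b₁ => exact (ih rfl rfl).tail (hR _ _ hbc)
      | inr b₂ => exact absurd hbc (hno _ _)

lemma fjRowSum_mulR {ι κ ρ : Type*} [Fintype ι] [Fintype κ] [Fintype ρ]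
    (M : Matrix ι κ ℝ) (N : Matrix κ ρ ℝ) (i : ι) :
    ∑ j, (M * N) i j = ∑ h, M i h * ∑ j, N h j := by
  simp only [Matrix.mul_apply, Finset.mul_sum]
  exact Finset.sum_comm

lemma fjRowSum_mul_leR {ι κ ρ : Type*} [Fintype ι] [Fintype κ] [Fintype ρ]
    {M : Matrix ι κ ℝ} {N : Matrix κ ρ ℝ} (hM : ∀ i j, 0 ≤ M i j) {c : ℝ}
    (hN : ∀ h, ∑ j, N h j ≤ c) (i : ι) : ∑ j, (M * N) i j ≤ c * ∑ j, M i j := by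
  rw [fjRowSum_mulR, Finset.mul_sum]
  refine Finset.sum_le_sum fun h _ => ?_
  rw [mul_comm c (M i h)]
  exact mul_le_mul_of_nonneg_left (hN h) (hM i h)

lemma fjReach {n₁ : ℕ} {A : Matrix (Fin n₁) (Fin n₁) ℝ} {lam1 : Fin n₁ → ℝ}
    {RW : Fin n₁ → Fin n₁ → Prop}
    (hA0 : ∀ i j, 0 ≤ A i j) (hArs : ∀ i, ∑ j, A i j ≤ 1)
    (hdef : ∀ i, lam1 i < 1 → ∑ j, A i j < 1)
    (hedge : ∀ i j, RW i j → lam1 i < 1 ∨ 0 < A i j)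
    {i j : Fin n₁} (hTG : Relation.TransGen RW i j) (hj : lam1 j < 1) :
    ∃ k, 0 < k ∧ ∑ j', (A ^ k) i j' < 1 := by
  have hmono : ∀ k t i, ∑ j', (A ^ k) i j' < 1 → ∑ j', (A ^ (k + t)) i j' < 1 := by
    intro k t i hk
    rw [pow_add, fjRowSum_mul]
    calc ∑ h, (A ^ k) i h * ∑ j', (A ^ t) h j'
        ≤ ∑ h, (A ^ k) i h * 1 := Finset.sum_le_sum fun h _ =>
          mul_le_mul_of_nonneg_left (fjRowSum_pow_le_one hA0 hArs t h) (fjPow_nonneg hA0 k i h)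
      _ < 1 := by simpa using hk
  have hstep : ∀ i h k, (lam1 i < 1 ∨ 0 < A i h) → ∑ j', (A ^ k) h j' < 1 →
      ∑ j', (A ^ (k + 1)) i j' < 1 := by
    intro i h k hcase hk
    rcases hcase with hl | hpos
    · have h1 : ∑ j', (A ^ 1) i j' < 1 := by simpa [pow_one] using hdef i hl
      have := hmono 1 k i h1
      rwa [add_comm] at this
    · rw [pow_succ', fjRowSum_mul]
      calc ∑ g, A i g * ∑ j', (A ^ k) g j'
          < ∑ g, A i g := by
            refine Finset.sum_lt_sum (fun g _ => ?_) ⟨h, Finset.mem_univ h, ?_⟩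
            · exact mul_le_of_le_one_right (hA0 i g) (fjRowSum_pow_le_one hA0 hArs k g)
            · exact mul_lt_of_lt_one_right hpos hk
        _ ≤ 1 := hArs i
  induction hTG using Relation.TransGen.head_induction_on with
  | single h =>
      rename_i a
      have hj1 : ∑ j', (A ^ 1) j j' < 1 := by simpa [pow_one] using hdef j hj
      exact ⟨2, by norm_num, hstep a j 1 (hedge _ _ h) hj1⟩
  | head h' h ihh =>
      rename_i a c
      obtain ⟨k, hk0, hk1⟩ := ihh
      exact ⟨k + 1, by omega, hstep a c k (hedge _ _ h') hk1⟩

lemma fjContraction {n₁ : ℕ} {A : Matrix (Fin n₁) (Fin n₁) ℝ}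
    (hA0 : ∀ i j, 0 ≤ A i j) (hArs : ∀ i, ∑ j, A i j ≤ 1)
    (hreach : ∀ i, ∃ k, 0 < k ∧ ∑ j, (A ^ k) i j < 1) :
    ∃ K r, 0 < K ∧ 0 ≤ r ∧ r < 1 ∧ ∀ a i, ∑ j, (A ^ a) i j ≤ r ^ (a / K) := by
  have hmono : ∀ k t i, ∑ j', (A ^ k) i j' < 1 → ∑ j', (A ^ (k + t)) i j' < 1 := by
    intro k t i hk
    rw [pow_add, fjRowSum_mul]
    calc ∑ h, (A ^ k) i h * ∑ j', (A ^ t) h j'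
        ≤ ∑ h, (A ^ k) i h * 1 := Finset.sum_le_sum fun h _ =>
          mul_le_mul_of_nonneg_left (fjRowSum_pow_le_one hA0 hArs t h) (fjPow_nonneg hA0 k i h)
      _ < 1 := by simpa using hk
  rcases isEmpty_or_nonempty (Fin n₁) with hempty | hne
  · exact ⟨1, 0, Nat.one_pos, le_refl 0, by norm_num, fun a i => (hempty.false i).elim⟩
  · choose kk hkk0 hkk1 using hreach
    set K := (Finset.univ.sup kk) + 1 with hK
    have hKpos : 0 < K := Nat.succ_pos _
    have hKrs : ∀ i, ∑ j, (A ^ K) i j < 1 := by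
      intro i
      have hle : kk i ≤ K := le_trans (Finset.le_sup (Finset.mem_univ i)) (Nat.le_succ _)
      have := hmono (kk i) (K - kk i) i (hkk1 i)
      rwa [Nat.add_sub_cancel' hle] at this
    set r := Finset.univ.sup' (Finset.univ_nonempty) (fun i => ∑ j, (A ^ K) i j) with hr
    have hrs : ∀ i, ∑ j, (A ^ K) i j ≤ r := by
      intro i
      rw [hr]
      exact Finset.le_sup' (fun i => ∑ j, (A ^ K) i j) (Finset.mem_univ i)
    have hr1 : r < 1 := by
      rw [hr, Finset.sup'_lt_iff]
      exact fun i _ => hKrs i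
    have hr0 : 0 ≤ r := by
      obtain ⟨i⟩ := hne
      exact le_trans (Finset.sum_nonneg fun j _ => fjPow_nonneg hA0 K i j) (hrs i)
    refine ⟨K, r, hKpos, hr0, hr1, ?_⟩
    have hKq : ∀ q i, ∑ j, (A ^ (K * q)) i j ≤ r ^ q := by
      intro q
      induction q with
      | zero => intro i; simp [Matrix.one_apply]
      | succ q ih =>
          intro i
          have : A ^ (K * (q + 1)) = A ^ (K * q) * A ^ K := by
            rw [← pow_add]; ring_nf
          rw [this]
          calc ∑ j, (A ^ (K * q) * A ^ K) i j
              ≤ r * ∑ j, (A ^ (K * q)) i j :=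
                fjRowSum_mul_le (fjPow_nonneg hA0 _) hrs i
            _ ≤ r * r ^ q := mul_le_mul_of_nonneg_left (ih i) hr0
            _ = r ^ (q + 1) := by ring
    intro a i
    have hsplit : A ^ a = A ^ (K * (a / K)) * A ^ (a % K) := by
      rw [← pow_add, Nat.div_add_mod]
    rw [hsplit]
    calc ∑ j, (A ^ (K * (a / K)) * A ^ (a % K)) i j
        ≤ 1 * ∑ j, (A ^ (K * (a / K))) i j :=
          fjRowSum_mul_le (fjPow_nonneg hA0 _) (fjRowSum_pow_le_one hA0 hArs _) i
      _ ≤ r ^ (a / K) := by rw [one_mul]; exact hKq _ i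
theorem fj_multidim_convergent_iff {n₁ n₂ m : ℕ} (hn₂ : 0 < n₂)
    (W11 : Matrix (Fin n₁) (Fin n₁) ℝ) (W12 : Matrix (Fin n₁) (Fin n₂) ℝ)
    (W22 : Matrix (Fin n₂) (Fin n₂) ℝ) (lam1 : Fin n₁ → ℝ)
    (W : Matrix (Fin n₁ ⊕ Fin n₂) (Fin n₁ ⊕ Fin n₂) ℝ)
    (hWblock : W = Matrix.fromBlocks W11 W12 0 W22)
    (lam : Fin n₁ ⊕ Fin n₂ → ℝ)
    (hlamblock : lam = Sum.elim lam1 (fun _ => 1))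
    (hW0 : ∀ i j, 0 ≤ W i j) (hW1 : ∀ i, ∑ j, W i j = 1)
    (hlam : ∀ i, 0 ≤ lam i ∧ lam i ≤ 1)
    (C : Matrix (Fin m) (Fin m) ℝ)
    -- the oblivious agents are exactly the agents of the second block:
    (hobl : ∀ i : Fin n₁ ⊕ Fin n₂,
      (¬ (lam i < 1 ∨ ∃ j, lam j < 1 ∧ Relation.TransGen (fun a b => 0 < W a b) i j)) ↔
        ∃ i₂ : Fin n₂, i = Sum.inr i₂) :
    (∀ u : (Fin n₁ ⊕ Fin n₂) × Fin m → ℝ, ∃ L : (Fin n₁ ⊕ Fin n₂) × Fin m → ℝ,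
        Tendsto (fun k => (fun x => ((Matrix.diagonal lam * W) ⊗ₖ C).mulVec x
            + ((1 - Matrix.diagonal lam) ⊗ₖ (1 : Matrix (Fin m) (Fin m) ℝ)).mulVec u)^[k] u)
          atTop (nhds L)) ↔
      (∃ Cstar : Matrix (Fin m) (Fin m) ℝ,
        Tendsto (fun k => C ^ k) atTop (nhds Cstar) ∧
        (Cstar = 0 ∨ ∃ W22star : Matrix (Fin n₂) (Fin n₂) ℝ,
          Tendsto (fun k => W22 ^ k) atTop (nhds W22star))) := by
  subst hWblock
  subst hlamblock
  set lam : Fin n₁ ⊕ Fin n₂ → ℝ := Sum.elim lam1 (fun _ => 1) with hlamdef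
  set Wb : Matrix (Fin n₁ ⊕ Fin n₂) (Fin n₁ ⊕ Fin n₂) ℝ := Matrix.fromBlocks W11 W12 0 W22
    with hWdef
  set P : Matrix (Fin n₁ ⊕ Fin n₂) (Fin n₁ ⊕ Fin n₂) ℝ := Matrix.diagonal lam * Wb with hPdef
  set A : Matrix (Fin n₁) (Fin n₁) ℝ := Matrix.diagonal lam1 * W11 with hAdef
  set B : Matrix (Fin n₁) (Fin n₂) ℝ := Matrix.diagonal lam1 * W12 with hBdef
  -- basic entry facts
  have hlam1 : ∀ i, 0 ≤ lam1 i ∧ lam1 i ≤ 1 := fun i => by simpa [hlamdef] using hlam (Sum.inl i)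
  have hW11nn : ∀ i j, 0 ≤ W11 i j := fun i j => by simpa [hWdef] using hW0 (Sum.inl i) (Sum.inl j)
  have hW12nn : ∀ i j, 0 ≤ W12 i j := fun i j => by simpa [hWdef] using hW0 (Sum.inl i) (Sum.inr j)
  have hW22nn : ∀ i j, 0 ≤ W22 i j := fun i j => by simpa [hWdef] using hW0 (Sum.inr i) (Sum.inr j)
  have hWrow1 : ∀ i, ∑ j, W11 i j + ∑ j, W12 i j = 1 := by
    intro i
    have h := hW1 (Sum.inl i)
    rw [Fintype.sum_sum_type] at h
    simpa [hWdef] using h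
  have hW22rs : ∀ i, ∑ j, W22 i j = 1 := by
    intro i
    have h := hW1 (Sum.inr i)
    rw [Fintype.sum_sum_type] at h
    simpa [hWdef] using h
  have hW11rs : ∀ i, ∑ j, W11 i j ≤ 1 := fun i => by
    have := hWrow1 i
    have h2 : 0 ≤ ∑ j, W12 i j := Finset.sum_nonneg fun j _ => hW12nn i j
    linarith
  have hW12rs : ∀ i, ∑ j, W12 i j ≤ 1 := fun i => by
    have := hWrow1 i
    have h2 : 0 ≤ ∑ j, W11 i j := Finset.sum_nonneg fun j _ => hW11nn i j
    linarith
  have hA0 : ∀ i j, 0 ≤ A i j := fun i j => by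
    rw [hAdef, Matrix.diagonal_mul]
    exact mul_nonneg (hlam1 i).1 (hW11nn i j)
  have hB0 : ∀ i j, 0 ≤ B i j := fun i j => by
    rw [hBdef, Matrix.diagonal_mul]
    exact mul_nonneg (hlam1 i).1 (hW12nn i j)
  have hArs : ∀ i, ∑ j, A i j ≤ lam1 i := by
    intro i
    have h : ∑ j, A i j = lam1 i * ∑ j, W11 i j := by
      rw [Finset.mul_sum]
      exact Finset.sum_congr rfl fun j _ => by rw [hAdef, Matrix.diagonal_mul]
    rw [h]
    exact mul_le_of_le_one_right (hlam1 i).1 (hW11rs i)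
  have hArs1 : ∀ i, ∑ j, A i j ≤ 1 := fun i => le_trans (hArs i) (hlam1 i).2
  have hBrs : ∀ i, ∑ j, B i j ≤ 1 := by
    intro i
    have h : ∑ j, B i j = lam1 i * ∑ j, W12 i j := by
      rw [Finset.mul_sum]
      exact Finset.sum_congr rfl fun j _ => by rw [hBdef, Matrix.diagonal_mul]
    rw [h]
    exact le_trans (mul_le_of_le_one_right (hlam1 i).1 (hW12rs i)) (hlam1 i).2
  have hP0 : ∀ i j, 0 ≤ P i j := fun i j => by
    rw [hPdef, Matrix.diagonal_mul]
    exact mul_nonneg (hlam i).1 (hW0 i j)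
  have hPrs : ∀ i, ∑ j, P i j ≤ 1 := by
    intro i
    have h : ∑ j, P i j = lam i * ∑ j, Wb i j := by
      rw [Finset.mul_sum]
      exact Finset.sum_congr rfl fun j _ => by rw [hPdef, Matrix.diagonal_mul]
    rw [h, hW1 i, mul_one]
    exact (hlam i).2
  have hPk0 : ∀ k i j, 0 ≤ (P ^ k) i j := fun k => fjPow_nonneg hP0 k
  have hPkrs : ∀ k i, ∑ j, (P ^ k) i j ≤ 1 := fun k i => fjRowSum_pow_le_one hP0 hPrs k i
  have hPkentry : ∀ k i j, (P ^ k) i j ≤ 1 :=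
    fun k i j => le_trans (fjEntry_le_rowSum (hPk0 k) i j) (hPkrs k i)
  have hPblock : P = Matrix.fromBlocks A B 0 W22 := by
    ext i j
    cases i <;> cases j <;>
      simp [hPdef, hAdef, hBdef, hWdef, hlamdef, Matrix.diagonal_mul]
  set T : ℕ → Matrix (Fin n₁) (Fin n₂) ℝ :=
    fun k => ∑ a ∈ Finset.range k, A ^ a * B * W22 ^ (k - 1 - a) with hTdef
  have hPpow : ∀ k, P ^ k = Matrix.fromBlocks (A ^ k) (T k) 0 (W22 ^ k) := by
    intro k
    rw [hPblock, fjBlockPow A B W22 k]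
  have hPinlinl : ∀ k i j, (P ^ k) (Sum.inl i) (Sum.inl j) = (A ^ k) i j := fun k i j => by
    rw [hPpow k]; rfl
  have hPinlinr : ∀ k i j, (P ^ k) (Sum.inl i) (Sum.inr j) = T k i j := fun k i j => by
    rw [hPpow k]; rfl
  have hPinrinl : ∀ k i j, (P ^ k) (Sum.inr i) (Sum.inl j) = 0 := fun k i j => by
    rw [hPpow k]; rfl
  have hPinrinr : ∀ k i j, (P ^ k) (Sum.inr i) (Sum.inr j) = (W22 ^ k) i j := fun k i j => by
    rw [hPpow k]; rfl
  -- contraction data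
  have hdefrow : ∀ i, lam1 i < 1 → ∑ j, A i j < 1 := fun i hl => lt_of_le_of_lt (hArs i) hl
  have hreach : ∀ i : Fin n₁, ∃ k, 0 < k ∧ ∑ j, (A ^ k) i j < 1 := by
    intro i
    have h1 : ¬ ∃ i₂ : Fin n₂, (Sum.inl i : Fin n₁ ⊕ Fin n₂) = Sum.inr i₂ := by simp
    have h2 := (not_iff_not.2 (hobl (Sum.inl i))).2 h1
    rw [not_not] at h2
    have hedge : ∀ a b, 0 < W11 a b → lam1 a < 1 ∨ 0 < A a b := by
      intro a b hw
      by_cases hla : lam1 a < 1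
      · exact Or.inl hla
      · refine Or.inr ?_
        rw [hAdef, Matrix.diagonal_mul]
        have : (1:ℝ) ≤ lam1 a := not_lt.1 hla
        exact mul_pos (lt_of_lt_of_le one_pos this) hw
    rcases h2 with hl | ⟨j, hj1, hTG⟩
    · refine ⟨1, one_pos, ?_⟩
      rw [pow_one]
      exact hdefrow i (by simpa [hlamdef] using hl)
    · cases j with
      | inr j₂ => simp [hlamdef] at hj1
      | inl j₁ =>
          have hj1' : lam1 j₁ < 1 := by simpa [hlamdef] using hj1
          have hR1 : Relation.TransGen (fun a b => 0 < W11 a b) i j₁ := by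
            refine fjRestrict (R := fun a b => 0 < Wb a b)
              (fun a b h => by simpa [hWdef] using h)
              (fun b x => by simp [hWdef]) hTG rfl rfl
          exact fjReach hA0 hArs1 hdefrow hedge hR1 hj1'
  obtain ⟨K, r, hKpos, hr0, hr1, hdecay⟩ := fjContraction hA0 hArs1 hreach
  have hAk0 : ∀ k i j, 0 ≤ (A ^ k) i j := fun k => fjPow_nonneg hA0 k
  have hAkentry : ∀ k i j, (A ^ k) i j ≤ r ^ (k / K) :=
    fun k i j => le_trans (fjEntry_le_rowSum (hAk0 k) i j) (hdecay k i)
  -- b entries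
  have h1md : (1 : Matrix (Fin n₁ ⊕ Fin n₂) (Fin n₁ ⊕ Fin n₂) ℝ) - Matrix.diagonal lam
      = Matrix.diagonal (fun i => 1 - lam i) := by
    rw [← Matrix.diagonal_one, Matrix.diagonal_sub]
  have hbEntry : ∀ (v : (Fin n₁ ⊕ Fin n₂) × Fin m → ℝ) i l,
      (((1 - Matrix.diagonal lam) ⊗ₖ (1 : Matrix (Fin m) (Fin m) ℝ)).mulVec v) (i, l)
        = (1 - lam i) * v (i, l) := by
    intro v i l
    rw [h1md, ← Matrix.diagonal_one (n := Fin m), Matrix.diagonal_kronecker_diagonal]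
    rw [Matrix.mulVec_diagonal]
    simp
  constructor
  · -- forward direction
    intro H
    have hIter : ∀ (u : (Fin n₁ ⊕ Fin n₂) × Fin m → ℝ), (∀ i₁ l, u (Sum.inl i₁, l) = 0) →
        ∀ k (i2 : Fin n₂) (l : Fin m),
        ((fun x => (P ⊗ₖ C).mulVec x
            + ((1 - Matrix.diagonal lam) ⊗ₖ (1 : Matrix (Fin m) (Fin m) ℝ)).mulVec u)^[k] u)
            (Sum.inr i2, l)
          = ∑ j2, ∑ l', (W22 ^ k) i2 j2 * (C ^ k) l l' * u (Sum.inr j2, l') := by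
      intro u hu k i2 l
      have hb : ((1 - Matrix.diagonal lam) ⊗ₖ (1 : Matrix (Fin m) (Fin m) ℝ)).mulVec u = 0 := by
        funext p
        obtain ⟨i, l'⟩ := p
        rw [hbEntry]
        cases i with
        | inl i₁ => simp [hu i₁ l']
        | inr i₂ => simp [hlamdef]
      rw [fjIterate]
      simp only [hb, Matrix.mulVec_zero, Finset.sum_const, smul_zero, Pi.add_apply,
        Pi.zero_apply, add_zero]
      rw [fjKronPow, fjKronMulVec, Fintype.sum_sum_type]
      have hzero : ∑ j₁, ∑ l', (P ^ k) (Sum.inr i2) (Sum.inl j₁) * (C ^ k) l l' * u (Sum.inl j₁, l')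
          = 0 :=
        Finset.sum_eq_zero fun j₁ _ => Finset.sum_eq_zero fun l' _ => by rw [hu j₁ l', mul_zero]
      rw [hzero, zero_add]
      exact Finset.sum_congr rfl fun j2 _ => Finset.sum_congr rfl fun l' _ => by
        rw [hPinrinr]
    have hCe : ∀ l l0' : Fin m, ∃ cc, Tendsto (fun k => (C ^ k) l l0') atTop (nhds cc) := by
      intro l l0'
      set u0 : (Fin n₁ ⊕ Fin n₂) × Fin m → ℝ :=
        fun p => Sum.elim (fun _ => (0:ℝ)) (fun _ => if p.2 = l0' then 1 else 0) p.1 with hu0def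
      have hu0 : ∀ i₁ l', u0 (Sum.inl i₁, l') = 0 := fun i₁ l' => rfl
      obtain ⟨L, hL⟩ := H u0
      have hcoord := (tendsto_pi_nhds.1 hL) (Sum.inr ⟨0, hn₂⟩, l)
      have hval : ∀ k,
          ((fun x => (P ⊗ₖ C).mulVec x
              + ((1 - Matrix.diagonal lam) ⊗ₖ (1 : Matrix (Fin m) (Fin m) ℝ)).mulVec u0)^[k] u0)
              (Sum.inr ⟨0, hn₂⟩, l) = (C ^ k) l l0' := by
        intro k
        rw [hIter u0 hu0 k ⟨0, hn₂⟩ l]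
        have h2 : ∀ j2', ∑ l', (W22 ^ k) (⟨0, hn₂⟩ : Fin n₂) j2' * (C ^ k) l l'
              * u0 (Sum.inr j2', l')
            = (W22 ^ k) (⟨0, hn₂⟩ : Fin n₂) j2' * (C ^ k) l l0' := by
          intro j2'
          have hu0r : ∀ l', u0 (Sum.inr j2', l') = if l' = l0' then 1 else 0 := fun l' => rfl
          simp [hu0r, mul_ite, mul_one, mul_zero, Finset.sum_ite_eq']
        rw [Finset.sum_congr rfl fun j2' _ => h2 j2', ← Finset.sum_mul,
          fjRowSum_pow_eq_one hW22rs, one_mul]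
      exact ⟨L (Sum.inr ⟨0, hn₂⟩, l), hcoord.congr hval⟩
    choose Cs hCs using hCe
    have hCconv : Tendsto (fun k => C ^ k) atTop (nhds (Matrix.of Cs)) := by
      refine tendsto_pi_nhds.2 ?_; intro l; rw [tendsto_pi_nhds]; intro l0'
      exact hCs l l0'
    refine ⟨Matrix.of Cs, hCconv, ?_⟩
    by_cases hC0 : Matrix.of Cs = (0 : Matrix (Fin m) (Fin m) ℝ)
    · exact Or.inl hC0
    · right
      have hex : ∃ l l0', Cs l l0' ≠ 0 := by
        by_contra hno
        push_neg at hno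
        exact hC0 (by ext l l0'; exact hno l l0')
      obtain ⟨ll, ll0, hne⟩ := hex
      have hWe : ∀ i2 j2 : Fin n₂, ∃ cc, Tendsto (fun k => (W22 ^ k) i2 j2) atTop (nhds cc) := by
        intro i2 j2
        set u2 : (Fin n₁ ⊕ Fin n₂) × Fin m → ℝ :=
          fun p => Sum.elim (fun _ => (0:ℝ))
            (fun j => (if j = j2 then 1 else 0) * (if p.2 = ll0 then 1 else 0)) p.1 with hu2def
        have hu2 : ∀ i₁ l', u2 (Sum.inl i₁, l') = 0 := fun i₁ l' => rfl
        obtain ⟨L, hL⟩ := H u2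
        have hcoord := (tendsto_pi_nhds.1 hL) (Sum.inr i2, ll)
        have hval : ∀ k,
            ((fun x => (P ⊗ₖ C).mulVec x
                + ((1 - Matrix.diagonal lam) ⊗ₖ (1 : Matrix (Fin m) (Fin m) ℝ)).mulVec u2)^[k] u2)
                (Sum.inr i2, ll) = (W22 ^ k) i2 j2 * (C ^ k) ll ll0 := by
          intro k
          rw [hIter u2 hu2 k i2 ll]
          have h2 : ∀ j2', ∑ l', (W22 ^ k) i2 j2' * (C ^ k) ll l' * u2 (Sum.inr j2', l')
              = (if j2' = j2 then (1:ℝ) else 0) * ((W22 ^ k) i2 j2' * (C ^ k) ll ll0) := by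
            intro j2'
            have hu2r : ∀ l', u2 (Sum.inr j2', l')
                = (if j2' = j2 then (1:ℝ) else 0) * (if l' = ll0 then 1 else 0) :=
              fun l' => rfl
            simp only [hu2r]
            by_cases hj : j2' = j2
            · simp [hj, mul_ite, mul_one, mul_zero, Finset.sum_ite_eq']
            · simp [hj]
          rw [Finset.sum_congr rfl fun j2' _ => h2 j2']
          rw [Finset.sum_eq_single j2]
          · simp
          · intro b _ hb; simp [hb]
          · intro hmem; exact absurd (Finset.mem_univ j2) hmem
        have hprod : Tendsto (fun k => (W22 ^ k) i2 j2 * (C ^ k) ll ll0) atTop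
            (nhds (L (Sum.inr i2, ll))) := hcoord.congr hval
        refine ⟨L (Sum.inr i2, ll) / Cs ll ll0, ?_⟩
        have hdiv := hprod.div (hCs ll ll0) hne
        refine hdiv.congr' ?_
        filter_upwards [(hCs ll ll0).eventually_ne hne] with k hk
        rw [Pi.div_apply, mul_div_assoc, div_self hk, mul_one]
      choose Ws hWs using hWe
      refine ⟨Matrix.of Ws, ?_⟩
      refine tendsto_pi_nhds.2 ?_; intro i2; rw [tendsto_pi_nhds]; intro j2
      exact hWs i2 j2
  · rintro ⟨Cstar, hC, hcase⟩ u
    set b : (Fin n₁ ⊕ Fin n₂) × Fin m → ℝ :=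
      ((1 - Matrix.diagonal lam) ⊗ₖ (1 : Matrix (Fin m) (Fin m) ℝ)).mulVec u with hbdef
    have hCen : ∀ l l', Tendsto (fun k => (C ^ k) l l') atTop (nhds (Cstar l l')) :=
      fun l l' => (tendsto_pi_nhds.1 ((tendsto_pi_nhds.1 hC) l)) l'
    obtain ⟨c, hc0, hcb⟩ := fjUnifBound hC
    have hrpow0 : ∀ a : ℕ, (0:ℝ) ≤ r ^ (a / K) := fun a => pow_nonneg hr0 _
    have hsummable : Summable (fun a : ℕ => r ^ (a / K)) := fjSummable_pow_div hr0 hr1 hKpos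
    have hrtend : Tendsto (fun a : ℕ => r ^ (a / K)) atTop (nhds 0) := hsummable.tendsto_atTop_zero
    have hW22k0 : ∀ e g j, 0 ≤ (W22 ^ e) g j := fun e => fjPow_nonneg hW22nn e
    have hW22kle : ∀ e g j, (W22 ^ e) g j ≤ 1 := fun e g j =>
      le_trans (fjEntry_le_rowSum (hW22k0 e) g j) (le_of_eq (fjRowSum_pow_eq_one hW22rs e g))
    have hABnn : ∀ (a : ℕ) (i : Fin n₁) (g : Fin n₂), 0 ≤ (A ^ a * B) i g := fun a i g => by
      rw [Matrix.mul_apply]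
      exact Finset.sum_nonneg fun h _ => mul_nonneg (hAk0 a i h) (hB0 h g)
    have hABrs : ∀ (a : ℕ) (i : Fin n₁), ∑ g, (A ^ a * B) i g ≤ r ^ (a / K) := fun a i => by
      calc ∑ g, (A ^ a * B) i g ≤ 1 * ∑ h, (A ^ a) i h :=
            fjRowSum_mul_leR (fjPow_nonneg hA0 a) hBrs i
        _ = ∑ h, (A ^ a) i h := one_mul _
        _ ≤ r ^ (a / K) := hdecay a i
    have hsummand : ∀ (i j : Fin n₁ ⊕ Fin n₂) (l l' : Fin m),
        ∃ cl, Tendsto (fun k => (P ^ k) i j * (C ^ k) l l') atTop (nhds cl) := by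
      intro i j l l'
      cases i with
      | inl i₁ =>
          cases j with
          | inl j₁ =>
              have hA : Tendsto (fun k => (A ^ k) i₁ j₁) atTop (nhds 0) := by
                refine squeeze_zero_norm (fun k => ?_) hrtend
                rw [Real.norm_eq_abs, abs_of_nonneg (hAk0 k i₁ j₁)]
                exact hAkentry k i₁ j₁
              refine ⟨0 * Cstar l l', (hA.mul (hCen l l')).congr fun k => ?_⟩
              rw [hPinlinl]
          | inr j₂ =>
              rcases hcase with hC0 | ⟨W22star, hW22⟩
              · refine ⟨0, squeeze_zero_norm (a := fun k => |(C ^ k) l l'|) (fun k => ?_) ?_⟩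
                · rw [Real.norm_eq_abs, abs_mul]
                  refine mul_le_of_le_one_left (abs_nonneg _) ?_
                  rw [abs_of_nonneg (hPk0 k _ _)]
                  exact hPkentry k _ _
                · have h0 := hCen l l'
                  rw [hC0] at h0
                  simpa using h0.abs
              · have hW22en : ∀ g j, Tendsto (fun k => (W22 ^ k) g j) atTop (nhds (W22star g j)) :=
                  fun g j => (tendsto_pi_nhds.1 ((tendsto_pi_nhds.1 hW22) g)) j
                have hTlim : Tendsto (fun k => T k i₁ j₂) atTop
                    (nhds (∑' a : ℕ, (A ^ a * B * W22star) i₁ j₂)) := by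
                  have hform : ∀ k, T k i₁ j₂
                      = ∑ a ∈ Finset.range k, (A ^ a * B * W22 ^ (k - 1 - a)) i₁ j₂ := by
                    intro k
                    rw [hTdef]
                    simp [Matrix.sum_apply]
                  refine Tendsto.congr (fun k => (hform k).symm) ?_
                  refine fjTendsto_sum_range_of_dominated (bound := fun a => r ^ (a / K))
                    hsummable ?_ ?_
                  · intro a
                    have hshift : Tendsto (fun k : ℕ => k - 1 - a) atTop atTop :=
                      tendsto_atTop_atTop.2 fun bb => ⟨bb + 1 + a, fun x hx => by omega⟩
                    have heq : ∀ k, (A ^ a * B * W22 ^ (k - 1 - a)) i₁ j₂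
                        = ∑ g, (A ^ a * B) i₁ g * (W22 ^ (k - 1 - a)) g j₂ := fun k =>
                      Matrix.mul_apply
                    have heq2 : (A ^ a * B * W22star) i₁ j₂
                        = ∑ g, (A ^ a * B) i₁ g * W22star g j₂ := Matrix.mul_apply
                    rw [heq2]
                    refine Tendsto.congr (fun k => (heq k).symm) ?_
                    refine tendsto_finset_sum _ fun g _ => ?_
                    exact (Tendsto.comp (hW22en g j₂) hshift).const_mul _
                  · intro k a
                    have h0 : 0 ≤ (A ^ a * B * W22 ^ (k - 1 - a)) i₁ j₂ := by
                      rw [Matrix.mul_apply]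
                      exact Finset.sum_nonneg fun g _ =>
                        mul_nonneg (hABnn a i₁ g) (hW22k0 _ g j₂)
                    rw [abs_of_nonneg h0, Matrix.mul_apply]
                    calc ∑ g, (A ^ a * B) i₁ g * (W22 ^ (k - 1 - a)) g j₂
                        ≤ ∑ g, (A ^ a * B) i₁ g * 1 := Finset.sum_le_sum fun g _ =>
                          mul_le_mul_of_nonneg_left (hW22kle _ g j₂) (hABnn a i₁ g)
                      _ = ∑ g, (A ^ a * B) i₁ g := by simp
                      _ ≤ r ^ (a / K) := hABrs a i₁
                refine ⟨_, (hTlim.mul (hCen l l')).congr fun k => ?_⟩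
                rw [hPinlinr]
      | inr i₂ =>
          cases j with
          | inl j₁ =>
              refine ⟨0, Tendsto.congr (fun k => ?_) tendsto_const_nhds⟩
              rw [hPinrinl k i₂ j₁, zero_mul]
          | inr j₂ =>
              rcases hcase with hC0 | ⟨W22star, hW22⟩
              · refine ⟨0, squeeze_zero_norm (a := fun k => |(C ^ k) l l'|) (fun k => ?_) ?_⟩
                · rw [Real.norm_eq_abs, abs_mul]
                  refine mul_le_of_le_one_left (abs_nonneg _) ?_
                  rw [abs_of_nonneg (hPk0 k _ _)]
                  exact hPkentry k _ _
                · have h0 := hCen l l'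
                  rw [hC0] at h0
                  simpa using h0.abs
              · have hW22en : ∀ g j, Tendsto (fun k => (W22 ^ k) g j) atTop (nhds (W22star g j)) :=
                  fun g j => (tendsto_pi_nhds.1 ((tendsto_pi_nhds.1 hW22) g)) j
                refine ⟨_, ((hW22en i₂ j₂).mul (hCen l l')).congr fun k => ?_⟩
                rw [hPinrinr]
    choose clim hclim using hsummand
    have hPinlBound : ∀ k (i : Fin n₁ ⊕ Fin n₂) j₁, |(P ^ k) i (Sum.inl j₁)| ≤ r ^ (k / K) := by
      intro k i j₁
      cases i with
      | inl i₁ =>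
          rw [hPinlinl, abs_of_nonneg (hAk0 k i₁ j₁)]
          exact hAkentry k i₁ j₁
      | inr i₂ =>
          rw [hPinrinl]
          simpa using hrpow0 k
    have hbinr : ∀ j₂ l', b (Sum.inr j₂, l') = 0 := fun j₂ l' => by
      rw [hbdef, hbEntry]
      simp [hlamdef]
    have hmain : ∀ p : (Fin n₁ ⊕ Fin n₂) × Fin m, ∃ Lp,
        Tendsto (fun k => ((fun x => (P ⊗ₖ C).mulVec x + b)^[k] u) p) atTop (nhds Lp) := by
      rintro ⟨i, l⟩
      have hpow : Tendsto (fun k => (((P ^ k) ⊗ₖ (C ^ k)).mulVec u) (i, l)) atTop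
          (nhds (∑ j, ∑ l', clim i j l l' * u (j, l'))) := by
        refine Tendsto.congr (fun k => (fjKronMulVec (P ^ k) (C ^ k) u i l).symm) ?_
        refine tendsto_finset_sum _ fun j _ => tendsto_finset_sum _ fun l' _ => ?_
        exact (hclim i j l l').mul_const _
      set s : ℕ → ℝ := fun j => (((P ^ j) ⊗ₖ (C ^ j)).mulVec b) (i, l) with hsdef
      set D : ℝ := ∑ j₁, ∑ l', c * |b (Sum.inl j₁, l')| with hDdef
      have hsbound : ∀ j, ‖s j‖ ≤ r ^ (j / K) * D := by
        intro j
        simp only [hsdef]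
        have hval : (((P ^ j) ⊗ₖ (C ^ j)).mulVec b) (i, l)
            = ∑ j₁, ∑ l', (P ^ j) i (Sum.inl j₁) * (C ^ j) l l' * b (Sum.inl j₁, l') := by
          rw [fjKronMulVec, Fintype.sum_sum_type]
          have hz : ∑ j₂, ∑ l', (P ^ j) i (Sum.inr j₂) * (C ^ j) l l' * b (Sum.inr j₂, l') = 0 :=
            Finset.sum_eq_zero fun j₂ _ => Finset.sum_eq_zero fun l' _ => by
              rw [hbinr j₂ l', mul_zero]
          rw [hz, add_zero]
        rw [hval, Real.norm_eq_abs]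
        calc |∑ j₁, ∑ l', (P ^ j) i (Sum.inl j₁) * (C ^ j) l l' * b (Sum.inl j₁, l')|
            ≤ ∑ j₁, |∑ l', (P ^ j) i (Sum.inl j₁) * (C ^ j) l l' * b (Sum.inl j₁, l')| :=
              Finset.abs_sum_le_sum_abs _ _
          _ ≤ ∑ j₁, ∑ l', |(P ^ j) i (Sum.inl j₁) * (C ^ j) l l' * b (Sum.inl j₁, l')| :=
              Finset.sum_le_sum fun j₁ _ => Finset.abs_sum_le_sum_abs _ _
          _ ≤ ∑ j₁, ∑ l', r ^ (j / K) * (c * |b (Sum.inl j₁, l')|) := by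
              refine Finset.sum_le_sum fun j₁ _ => Finset.sum_le_sum fun l' _ => ?_
              rw [abs_mul, abs_mul, ← mul_assoc]
              refine mul_le_mul ?_ le_rfl (abs_nonneg _) (mul_nonneg (hrpow0 j) hc0)
              exact mul_le_mul (hPinlBound j i j₁) (hcb j l l') (abs_nonneg _) (hrpow0 j)
          _ = r ^ (j / K) * D := by
              rw [hDdef, Finset.mul_sum]
              refine Finset.sum_congr rfl fun j₁ _ => ?_
              rw [Finset.mul_sum]
      have hsumm : Summable s := Summable.of_norm_bounded (hsummable.mul_right D) hsbound
      refine ⟨(∑ j, ∑ l', clim i j l l' * u (j, l')) + ∑' j, s j, ?_⟩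
      have hser : Tendsto (fun k => ∑ j ∈ Finset.range k, s j) atTop (nhds (∑' j, s j)) :=
        hsumm.hasSum.tendsto_sum_nat
      refine Tendsto.congr (fun k => ?_) (hpow.add hser)
      rw [fjIterate (P ⊗ₖ C) b u k, Pi.add_apply, Finset.sum_apply]
      congr 1
      · rw [fjKronPow]
      · refine Finset.sum_congr rfl fun j _ => ?_
        rw [fjKronPow]
    choose L hL using hmain
    exact ⟨L, tendsto_pi_nhds.2 hL⟩
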